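/- For K ≥ 1 and t ∈ [t0, 1) with t0 = (e-1)/(e+1), log((1 + t^(1/K))/(1 - t^(1/K))) ≤ K·log((1+t)/(1-t)). -/

import Mathlib

open Real

private lemma hasDerivAt_g {x : ℝ} (hx1 : (1:ℝ) + x ≠ 0) (hx2 : (1:ℝ) - x ≠ 0) :
    HasDerivAt (fun y : ℝ => Real.log (1 + y) - Real.log (1 - y))
      (1 / (1 + x) + 1 / (1 - x)) x := by
  have h1 : HasDerivAt (fun y : ℝ => Real.log (1 + y)) (1 / (1 + x)) x := by
    have ha : HasDerivAt (fun y : ℝ => 1 + y) 1 x := by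
      simpa using (hasDerivAt_id x).const_add 1
    simpa [one_div, Function.comp_def] using (Real.hasDerivAt_log hx1).comp x ha
  have h2 : HasDerivAt (fun y : ℝ => Real.log (1 - y)) (-(1 / (1 - x))) x := by
    have ha : HasDerivAt (fun y : ℝ => 1 - y) (-1) x := by
      simpa using (hasDerivAt_id x).const_sub 1
    have := (Real.hasDerivAt_log hx2).comp x ha
    simpa [one_div, Function.comp_def] using this
  simpa [sub_neg_eq_add, Pi.sub_def] using h1.sub h2

private lemma convexOn_g : ConvexOn ℝ (Set.Ico (0:ℝ) 1)
    (fun y : ℝ => Real.log (1 + y) - Real.log (1 - y)) := by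
  have hint : interior (Set.Ico (0:ℝ) 1) = Set.Ioo 0 1 := interior_Ico
  have hderiv : ∀ x ∈ Set.Ioo (0:ℝ) 1,
      HasDerivAt (fun y : ℝ => Real.log (1 + y) - Real.log (1 - y))
        (1 / (1 + x) + 1 / (1 - x)) x := by
    intro x hx
    exact hasDerivAt_g (by nlinarith [hx.1, hx.2]) (by nlinarith [hx.1, hx.2])
  apply MonotoneOn.convexOn_of_deriv (convex_Ico 0 1)
  · apply ContinuousOn.sub
    · apply Real.continuousOn_log.comp (by fun_prop)
      intro x hx; simp only [Set.mem_Ico] at hx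
      simp only [Set.mem_compl_iff, Set.mem_singleton_iff]
      nlinarith [hx.1, hx.2]
    · apply Real.continuousOn_log.comp (by fun_prop)
      intro x hx; simp only [Set.mem_Ico] at hx
      simp only [Set.mem_compl_iff, Set.mem_singleton_iff]
      nlinarith [hx.1, hx.2]
  · rw [hint]
    intro x hx
    exact (hderiv x hx).differentiableAt.differentiableWithinAt
  · rw [hint]
    intro x hx y hy hxy
    rw [(hderiv x hx).deriv, (hderiv y hy).deriv]
    have hx1 := hx.1; have hx2 := hx.2; have hy1 := hy.1; have hy2 := hy.2
    have hx1' : (1:ℝ) + x ≠ 0 := by nlinarith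
    have hx2' : (1:ℝ) - x ≠ 0 := by nlinarith
    have hy1' : (1:ℝ) + y ≠ 0 := by nlinarith
    have hy2' : (1:ℝ) - y ≠ 0 := by nlinarith
    have e1 : 1 / (1 + x) + 1 / (1 - x) = 2 / (1 - x ^ 2) := by
      rw [div_add_div _ _ hx1' hx2']
      congr 1 <;> ring
    have e2 : 1 / (1 + y) + 1 / (1 - y) = 2 / (1 - y ^ 2) := by
      rw [div_add_div _ _ hy1' hy2']
      congr 1 <;> ring
    rw [e1, e2]
    apply div_le_div_of_nonneg_left (by norm_num) (by nlinarith) (by nlinarith)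

/-- key ratio lemma: `q * g p ≤ p * g q` for `0 < p ≤ q < 1`. -/
private lemma ratio_lemma {p q : ℝ} (hp : 0 < p) (hpq : p ≤ q) (hq : q < 1) :
    q * (Real.log (1 + p) - Real.log (1 - p)) ≤
      p * (Real.log (1 + q) - Real.log (1 - q)) := by
  have hq0 : 0 < q := lt_of_lt_of_le hp hpq
  have h0 : (0:ℝ) ∈ Set.Ico (0:ℝ) 1 := by constructor <;> norm_num
  have hqmem : q ∈ Set.Ico (0:ℝ) 1 := ⟨hq0.le, hq⟩
  have ha : (0:ℝ) ≤ 1 - p / q := by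
    have : p / q ≤ 1 := (div_le_one hq0).2 hpq
    linarith
  have hb : (0:ℝ) ≤ p / q := by positivity
  have hab : (1 - p / q) + p / q = 1 := by ring
  have := convexOn_g.2 h0 hqmem ha hb hab
  simp only [smul_eq_mul, mul_zero, zero_add, Real.log_one, add_zero, sub_zero,
    mul_zero, zero_sub] at this
  have hpq' : (p / q) * q = p := div_mul_cancel₀ p hq0.ne'
  rw [hpq'] at this
  have : Real.log (1 + p) - Real.log (1 - p) ≤
      (p / q) * (Real.log (1 + q) - Real.log (1 - q)) := by linarith [this]
  calc q * (Real.log (1 + p) - Real.log (1 - p))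
      ≤ q * ((p / q) * (Real.log (1 + q) - Real.log (1 - q))) := by
        apply mul_le_mul_of_nonneg_left this hq0.le
    _ = p * (Real.log (1 + q) - Real.log (1 - q)) := by
        field_simp

set_option maxHeartbeats 1000000 in
theorem stmt_8 (K t : ℝ) (hK : 1 ≤ K)
    (ht : t ∈ Set.Ico ((Real.exp 1 - 1) / (Real.exp 1 + 1)) 1) :
    Real.log ((1 + t ^ (1 / K)) / (1 - t ^ (1 / K))) ≤
      K * Real.log ((1 + t) / (1 - t)) := by
  obtain ⟨ht0', ht1⟩ := ht
  have he : (1:ℝ) < Real.exp 1 := by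
    have := Real.add_one_le_exp (1:ℝ); linarith
  have hK0 : 0 < K := lt_of_lt_of_le one_pos hK
  have ht0 : 0 < t := by
    refine lt_of_lt_of_le ?_ ht0'
    apply div_pos <;> linarith
  have h1t : 0 < 1 - t := by linarith
  have h1t' : 0 < 1 + t := by linarith
  set L := Real.log ((1 + t) / (1 - t)) with hLdef
  have hratio : Real.exp 1 ≤ (1 + t) / (1 - t) := by
    rw [le_div_iff₀ h1t]
    have : (Real.exp 1 - 1) ≤ t * (Real.exp 1 + 1) := by
      rw [← div_le_iff₀ (by linarith)] at *
      linarith [ht0']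
    nlinarith
  have hL1 : 1 ≤ L := by
    have := Real.log_le_log (Real.exp_pos 1) hratio
    rwa [Real.log_exp] at this
  have hL0 : 0 < L := lt_of_lt_of_le one_pos hL1
  have hexpL : Real.exp L = (1 + t) / (1 - t) :=
    Real.exp_log (by positivity)
  -- q_a and q_b
  set qa := Real.exp (-L) with hqa
  set qb := Real.exp (-(K * L)) with hqb
  have hqa0 : 0 < qa := Real.exp_pos _
  have hqb0 : 0 < qb := Real.exp_pos _
  have hqa1 : qa < 1 := by
    rw [hqa, Real.exp_lt_one_iff]; linarith
  have hqb1 : qb < 1 := by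
    rw [hqb, Real.exp_lt_one_iff]; nlinarith
  have hqbqa : qb ≤ qa := by
    apply Real.exp_le_exp.2; nlinarith
  have hqa_eq : qa = (1 - t) / (1 + t) := by
    rw [hqa, Real.exp_neg, hexpL, inv_div]
  -- t in terms of qa
  have ht_eq : t = (1 - qa) / (1 + qa) := by
    rw [hqa_eq]
    field_simp
    ring
  -- log t = log (1 - qa) - log (1 + qa)
  have hlogt : Real.log t = Real.log (1 - qa) - Real.log (1 + qa) := by
    rw [ht_eq, Real.log_div (by nlinarith) (by nlinarith)]
  -- τ
  set τ := (1 - qb) / (1 + qb) with hτ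
  have hτ0 : 0 < τ := by apply div_pos <;> nlinarith
  have hτ1 : τ < 1 := by
    rw [hτ, div_lt_one (by nlinarith)]; nlinarith
  have hlogτ : Real.log τ = Real.log (1 - qb) - Real.log (1 + qb) := by
    rw [hτ, Real.log_div (by nlinarith) (by nlinarith)]
  -- K * qb ≤ qa
  have hKqb : K * qb ≤ qa := by
    have h1 : K ≤ Real.exp (K - 1) := by
      have := Real.add_one_le_exp (K - 1); linarith
    have h2 : Real.exp (K - 1) ≤ Real.exp ((K - 1) * L) := by
      apply Real.exp_le_exp.2; nlinarith
    calc K * qb ≤ Real.exp ((K - 1) * L) * qb := by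
          apply mul_le_mul_of_nonneg_right (h1.trans h2) hqb0.le
      _ = qa := by
          rw [hqb, hqa, ← Real.exp_add]
          congr 1
          ring
  -- g qa ≥ 0
  have hgqa : 0 ≤ Real.log (1 + qa) - Real.log (1 - qa) := by
    have := Real.log_le_log (by nlinarith) (show 1 - qa ≤ 1 + qa by linarith)
    linarith
  -- key: log t ≤ K * log τ
  have hkey : Real.log t ≤ K * Real.log τ := by
    rw [hlogt, hlogτ]
    have hr := ratio_lemma hqb0 hqbqa hqa1
    -- qa * g qb ≤ qb * g qa  with g x = log(1+x) - log(1-x)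
    have h2 : K * (Real.log (1 + qb) - Real.log (1 - qb)) ≤
        Real.log (1 + qa) - Real.log (1 - qa) := by
      have h3 : qa * (K * (Real.log (1 + qb) - Real.log (1 - qb)))
          ≤ qa * (Real.log (1 + qa) - Real.log (1 - qa)) := by
        calc qa * (K * (Real.log (1 + qb) - Real.log (1 - qb)))
            = K * (qa * (Real.log (1 + qb) - Real.log (1 - qb))) := by ring
          _ ≤ K * (qb * (Real.log (1 + qa) - Real.log (1 - qa))) := by
              apply mul_le_mul_of_nonneg_left hr hK0.le
          _ = (K * qb) * (Real.log (1 + qa) - Real.log (1 - qa)) := by ring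
          _ ≤ qa * (Real.log (1 + qa) - Real.log (1 - qa)) := by
              apply mul_le_mul_of_nonneg_right hKqb hgqa
      exact le_of_mul_le_mul_left h3 hqa0
    linarith
  -- s := t ^ (1/K) ≤ τ
  have hs : t ^ (1 / K) ≤ τ := by
    rw [Real.rpow_def_of_pos ht0]
    have h1 : Real.log t * (1 / K) ≤ Real.log τ := by
      rw [mul_one_div, div_le_iff₀ hK0]
      calc Real.log t ≤ K * Real.log τ := hkey
        _ = Real.log τ * K := by ring
    calc Real.exp (Real.log t * (1 / K)) ≤ Real.exp (Real.log τ) :=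
          Real.exp_le_exp.2 h1
      _ = τ := Real.exp_log hτ0
  have hs0 : 0 ≤ t ^ (1 / K) := Real.rpow_nonneg ht0.le _
  -- final monotonicity
  have hmono : (1 + t ^ (1 / K)) / (1 - t ^ (1 / K)) ≤ (1 + τ) / (1 - τ) := by
    have hsτ1 : 0 < 1 - t ^ (1 / K) := by linarith [hs, hτ1]
    rw [div_le_div_iff₀ hsτ1 (by linarith)]
    nlinarith [hs]
  have hfinal : Real.log ((1 + τ) / (1 - τ)) = K * L := by
    have : (1 + τ) / (1 - τ) = Real.exp (K * L) := by
      have hd : (0:ℝ) < 1 + qb := by nlinarith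
      have hτsimp : (1 + τ) / (1 - τ) = 1 / qb := by
        rw [hτ]
        field_simp
        ring
        exact mul_inv_cancel₀ hqb0.ne'
      rw [hτsimp, one_div, hqb, ← Real.exp_neg, neg_neg]
    rw [this, Real.log_exp]
  calc Real.log ((1 + t ^ (1 / K)) / (1 - t ^ (1 / K)))
      ≤ Real.log ((1 + τ) / (1 - τ)) := by
        apply Real.log_le_log (div_pos (by linarith [hs0]) (by linarith [hs, hτ1])) hmono
    _ = K * L := hfinal
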